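/- Let $Q$ be a division ring containing a field $K$ in its center, let $A \subseteq Q$ be a $K$-subalgebra such that every element of $Q$ can be written as $b^{-1}a$ with $a, b \in A$, $b \ne 0$ (i.e., $Q$ is a left quotient ring of $A$), and let $E \subseteq Q$ be a division subring containing $K$. If $Q$ is infinite-dimensional as a right $E$-vector space, then the right $E$-submodule $AE$ of $Q$ generated by $A$ is infinite-dimensional as a right $E$-vector space. -/

import Mathlib

open MulOpposite in
/-- Remark 1 of the paper: if `Q` is a left quotient division ring of the subalgebra `A`
(every element of `Q` is `b⁻¹ a` with `a, b ∈ A`, `b ≠ 0`), `E` is a division subring of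
`Q` containing `K`, and `Q` is infinite-dimensional as a right `E`-vector space, then the
right `E`-module `AE` generated by `A` is infinite-dimensional as a right `E`-vector space. -/
theorem stmt5 {K Q : Type*} [Field K] [DivisionRing Q] [Algebra K Q]
    (A : Subalgebra K Q)
    (hQuot : ∀ q : Q, ∃ a ∈ A, ∃ b ∈ A, b ≠ 0 ∧ q = b⁻¹ * a)
    (E : Subring Q) (hEK : ∀ c : K, algebraMap K Q c ∈ E)
    (hEinv : ∀ x ∈ E, x⁻¹ ∈ E)
    (hQinf : ¬ ∃ s : Finset Q, ∀ q : Q, ∃ c : Q → Q,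
      (∀ x ∈ s, c x ∈ E) ∧ q = ∑ x ∈ s, x * c x) :
    ¬ ∃ s : Finset Q, ∀ a ∈ A, ∃ c : Q → Q,
      (∀ x ∈ s, c x ∈ E) ∧ (a : Q) = ∑ x ∈ s, x * c x := by
  classical
  rintro ⟨s, hs⟩
  apply hQinf
  refine ⟨s, fun q => ?_⟩
  -- F : the division subring E, viewed as a subfield of Qᵐᵒᵖ
  set F : Subfield Qᵐᵒᵖ :=
    { E.op with
      inv_mem' := fun x hx => by
        simpa using hEinv x.unop hx } with hF
  set s' : Finset Qᵐᵒᵖ := s.image op with hs'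
  -- W = span of op '' A over F (this is AE in opposite form)
  set W : Submodule F Qᵐᵒᵖ := Submodule.span F (op '' (A : Set Q)) with hW
  set V : Submodule F Qᵐᵒᵖ := Submodule.span F (s' : Set Qᵐᵒᵖ) with hV
  have key : ∀ a ∈ A, op a ∈ V := by
    intro a ha
    obtain ⟨c, hc, hsum⟩ := hs a ha
    rw [hV, Submodule.mem_span_finset]
    refine ⟨fun x => if hx : x.unop ∈ s then (⟨op (c x.unop), by exact hc _ hx⟩ : F) else 0,
      ?_, ?_⟩
    · intro x hx
      rw [Function.mem_support] at hx
      rw [hs', Finset.coe_image]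
      refine ⟨x.unop, ?_, by simp⟩
      by_contra h
      exact hx (dif_neg h)
    rw [hs', Finset.sum_image (by simp [op_injective.eq_iff])]
    calc ∑ x ∈ s, (if hx : (op x).unop ∈ s then
            (⟨op (c ((op x).unop)), by exact hc _ (by simpa using hx)⟩ : F) else 0) • op x
        = ∑ x ∈ s, op (x * c x) := by
          refine Finset.sum_congr rfl fun x hx => ?_
          simp only [unop_op, hx, dif_pos]
          rfl
      _ = op (∑ x ∈ s, x * c x) := (map_sum (opAddEquiv (α := Q)) _ s).symm
      _ = op a := by rw [hsum]
  have hWV : W ≤ V := by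
    rw [hW, Submodule.span_le]
    rintro _ ⟨a, ha, rfl⟩
    exact key a ha
  have : FiniteDimensional F V := Module.Finite.span_finset F s'
  have hVW : FiniteDimensional F W := Submodule.finiteDimensional_of_le hWV
  -- get the quotient representation of q
  obtain ⟨a, ha, b, hb, hb0, hq⟩ := hQuot q
  -- right multiplication by op b on Qᵐᵒᵖ is F-linear
  let φ : Qᵐᵒᵖ →ₗ[F] Qᵐᵒᵖ :=
    { toFun := fun x => x * op b
      map_add' := fun x y => add_mul x y (op b)
      map_smul' := fun f x => (mul_assoc (f : Qᵐᵒᵖ) x (op b)) }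
  have hφW : ∀ x ∈ W, φ x ∈ W := by
    intro x hx
    refine Submodule.span_induction ?_ ?_ ?_ ?_ hx
    · rintro _ ⟨a', ha', rfl⟩
      refine Submodule.subset_span ⟨b * a', mul_mem hb ha', ?_⟩
      simp [φ, op_mul]
    · simpa [φ] using W.zero_mem
    · intro x y _ _ hx hy
      simpa using W.add_mem hx hy
    · intro f x _ hx
      simpa using W.smul_mem f hx
  let ψ : W →ₗ[F] W := (φ.restrict hφW)
  have hψinj : Function.Injective ψ := by
    intro x y hxy
    have : (x : Qᵐᵒᵖ) * op b = (y : Qᵐᵒᵖ) * op b := congrArg Subtype.val hxy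
    have hb0' : op b ≠ 0 := by simpa using hb0
    exact Subtype.ext (mul_right_cancel₀ hb0' this)
  have hψsurj : Function.Surjective ψ := LinearMap.injective_iff_surjective.mp hψinj
  have haW : op a ∈ W := Submodule.subset_span ⟨a, ha, rfl⟩
  obtain ⟨⟨x, hxW⟩, hx⟩ := hψsurj ⟨op a, haW⟩
  have hxa : x * op b = op a := congrArg Subtype.val hx
  have hqx : op q = x := by
    have : b * x.unop = a := by
      have := congrArg unop hxa
      simpa using this
    rw [hq, ← this, ← mul_assoc, inv_mul_cancel₀ hb0, one_mul]
    simp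
  have hqV : op q ∈ V := hWV (hqx ▸ hxW)
  rw [hV, Submodule.mem_span_finset] at hqV
  obtain ⟨f, -, hf⟩ := hqV
  refine ⟨fun x => (f (op x) : Qᵐᵒᵖ).unop, fun x hx => (f (op x)).2, ?_⟩
  have : ∑ i ∈ s', f i • i = ∑ x ∈ s, op (x * (f (op x) : Qᵐᵒᵖ).unop) := by
    rw [hs', Finset.sum_image (by simp [op_injective.eq_iff])]
    refine Finset.sum_congr rfl fun x hx => ?_
    rfl
  rw [this] at hf
  have h2 : op (∑ x ∈ s, x * (f (op x) : Qᵐᵒᵖ).unop) = op q :=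
    (map_sum (opAddEquiv (α := Q)) _ s).trans hf
  exact (op_inj.mp h2).symm
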